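/- Fix β > 0 and K > 0 and suppose Ẽ_{β,K} = {z_1, ..., z_r} with r ∈ {1, 2, 3}. For z ∈ ℝ define ν_z ∈ P by ν_z(i) = e^{2βK z · i} ρ_β(i) / Σ_{j∈{−1,0,1}} e^{2βK z · j} ρ_β(j) for i ∈ {−1,0,1}. Then: (1) for each k, t_k = 2βK z_k is the unique t ∈ ℝ such that the tilted measure with mass proportional to e^{t·i} ρ_β(i) has mean z_k, so in particular the mean of ν_{z_k} equals z_k; (2) the measures ν_{z_1}, ..., ν_{z_r} are pairwise distinct; (3) E_{β,K} = {ν_{z_1}, ..., ν_{z_r}}. -/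

import Mathlib

noncomputable section

/-- `μ = (μ₋₁, μ₀, μ₁)` is a probability vector on `Λ = {-1,0,1}`. -/
def IsProbVec (μ : ℝ × ℝ × ℝ) : Prop :=
  0 ≤ μ.1 ∧ 0 ≤ μ.2.1 ∧ 0 ≤ μ.2.2 ∧ μ.1 + μ.2.1 + μ.2.2 = 1

/-- Relative entropy `R(μ|ρ)` with respect to the uniform measure `ρ = (1/3,1/3,1/3)`
(the convention `0 · log 0 = 0` holds automatically since `Real.log 0 = 0`). -/
def relEntUnif (μ : ℝ × ℝ × ℝ) : ℝ :=
  μ.1 * Real.log (3 * μ.1) + μ.2.1 * Real.log (3 * μ.2.1) + μ.2.2 * Real.log (3 * μ.2.2)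

/-- `f_K(μ) = (μ₁ + μ₋₁) − K (μ₁ − μ₋₁)²`. -/
def fK (K : ℝ) (μ : ℝ × ℝ × ℝ) : ℝ :=
  (μ.2.2 + μ.1) - K * (μ.2.2 - μ.1) ^ 2

/-- The set `E_{β,K}` of canonical equilibrium macrostates: the minimizers of
`R(μ|ρ) + β f_K(μ)` over probability vectors. -/
def canonE (β K : ℝ) : Set (ℝ × ℝ × ℝ) :=
  {μ | IsProbVec μ ∧ ∀ ν, IsProbVec ν →
    relEntUnif μ + β * fK K μ ≤ relEntUnif ν + β * fK K ν}

/-- The measure `ρ_β` with `ρ_β(±1) = e^{−β}/(1+2e^{−β})` and `ρ_β(0) = 1/(1+2e^{−β})`. -/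
def rhoBeta (β : ℝ) : ℝ × ℝ × ℝ :=
  (Real.exp (-β) / (1 + 2 * Real.exp (-β)),
   1 / (1 + 2 * Real.exp (-β)),
   Real.exp (-β) / (1 + 2 * Real.exp (-β)))

/-- The second-order critical value `K_c^{(2)}(β) = 1/(4βe^{−β}) + 1/(2β)`. -/
def Kc2 (β : ℝ) : ℝ := 1 / (4 * β * Real.exp (-β)) + 1 / (2 * β)

/-- `c_β(t) = log[(1 + e^{−β}(e^t + e^{−t}))/(1 + 2e^{−β})]`. -/
def cBeta (β t : ℝ) : ℝ :=
  Real.log ((1 + Real.exp (-β) * (Real.exp t + Real.exp (-t))) / (1 + 2 * Real.exp (-β)))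

/-- `J_β(z) = sup_{t ∈ ℝ} {t z − c_β(t)}`, the Legendre–Fenchel transform of `c_β`. -/
def Jbeta (β z : ℝ) : ℝ := ⨆ t : ℝ, (t * z - cBeta β t)

/-- `Ẽ_{β,K}`: the set of `z ∈ [-1,1]` minimizing `J_β(z) − βK z²` over `[-1,1]`. -/
def tildeE (β K : ℝ) : Set ℝ :=
  {z | z ∈ Set.Icc (-1 : ℝ) 1 ∧
    ∀ y ∈ Set.Icc (-1 : ℝ) 1, Jbeta β z - β * K * z ^ 2 ≤ Jbeta β y - β * K * y ^ 2}

/-- The tilted measure with mass at `i ∈ {-1,0,1}` proportional to `e^{t·i} ρ_β(i)`. -/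
def tilted (β t : ℝ) : ℝ × ℝ × ℝ :=
  (Real.exp (-t) * (rhoBeta β).1 /
      (Real.exp (-t) * (rhoBeta β).1 + (rhoBeta β).2.1 + Real.exp t * (rhoBeta β).2.2),
   (rhoBeta β).2.1 /
      (Real.exp (-t) * (rhoBeta β).1 + (rhoBeta β).2.1 + Real.exp t * (rhoBeta β).2.2),
   Real.exp t * (rhoBeta β).2.2 /
      (Real.exp (-t) * (rhoBeta β).1 + (rhoBeta β).2.1 + Real.exp t * (rhoBeta β).2.2))

/-- The mean `μ₁ − μ₋₁` of a probability vector `μ = (μ₋₁, μ₀, μ₁)`. -/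
def meanPV (μ : ℝ × ℝ × ℝ) : ℝ := μ.2.2 - μ.1


def Zb (β t : ℝ) : ℝ := 1 + Real.exp (-β) * (Real.exp t + Real.exp (-t))

def mB (β t : ℝ) : ℝ := Real.exp (-β) * (Real.exp t - Real.exp (-t)) / Zb β t


lemma Zb_pos (β t : ℝ) : 0 < Zb β t := by unfold Zb; positivity
lemma onep2a_pos (β : ℝ) : 0 < 1 + 2 * Real.exp (-β) := by positivity

lemma expt_mul (t : ℝ) : Real.exp t * Real.exp (-t) = 1 := by
  rw [← Real.exp_add]; simp

lemma mB_lt_one (β t : ℝ) : mB β t < 1 := by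
  rw [mB, div_lt_one (Zb_pos β t), Zb]
  nlinarith [Real.exp_pos (-t), Real.exp_pos (-β)]

lemma neg_one_lt_mB (β t : ℝ) : -1 < mB β t := by
  rw [mB, lt_div_iff₀ (Zb_pos β t), Zb]
  nlinarith [Real.exp_pos t, Real.exp_pos (-β)]

lemma mB_mem (β t : ℝ) : mB β t ∈ Set.Icc (-1 : ℝ) 1 :=
  ⟨(neg_one_lt_mB β t).le, (mB_lt_one β t).le⟩

lemma mB_neg (β t : ℝ) : mB β (-t) = - mB β t := by
  rw [mB, mB, Zb, Zb, neg_neg]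
  ring

lemma hasDerivAt_Zb (β t : ℝ) :
    HasDerivAt (Zb β) (Real.exp (-β) * (Real.exp t - Real.exp (-t))) t := by
  have h1 : HasDerivAt (fun s : ℝ => Real.exp s + Real.exp (-s))
      (Real.exp t - Real.exp (-t)) t := by
    have h := (Real.hasDerivAt_exp t).add ((hasDerivAt_neg t).exp)
    exact h.congr_deriv (by ring)
  exact (h1.const_mul (Real.exp (-β))).const_add 1

lemma hasDerivAt_mB (β t : ℝ) :
    HasDerivAt (mB β)
      ((Real.exp (-β) * (Real.exp t + Real.exp (-t)) + 4 * Real.exp (-β) ^ 2) / (Zb β t) ^ 2) t := by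
  have hN : HasDerivAt (fun s => Real.exp (-β) * (Real.exp s - Real.exp (-s)))
      (Real.exp (-β) * (Real.exp t + Real.exp (-t))) t := by
    have h1 : HasDerivAt (fun s : ℝ => Real.exp s - Real.exp (-s))
        (Real.exp t + Real.exp (-t)) t := by
      have h := (Real.hasDerivAt_exp t).sub ((hasDerivAt_neg t).exp)
      exact h.congr_deriv (by ring)
    exact h1.const_mul _
  have h := hN.div (hasDerivAt_Zb β t) (Zb_pos β t).ne'
  refine h.congr_deriv ?_
  have he := expt_mul t
  rw [Zb]
  have hnum : Real.exp (-β) * (Real.exp t + Real.exp (-t)) + 4 * Real.exp (-β) ^ 2 =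
      Real.exp (-β) * (Real.exp t + Real.exp (-t)) * (1 + Real.exp (-β) * (Real.exp t + Real.exp (-t)))
        - Real.exp (-β) * (Real.exp t - Real.exp (-t)) * (Real.exp (-β) * (Real.exp t - Real.exp (-t))) := by
    nlinarith [he]
  rw [hnum]

lemma deriv_mB_pos (β t : ℝ) :
    0 < (Real.exp (-β) * (Real.exp t + Real.exp (-t)) + 4 * Real.exp (-β) ^ 2) / (Zb β t) ^ 2 := by
  have := Zb_pos β t
  positivity

lemma mB_strictMono (β : ℝ) : StrictMono (mB β) := by
  apply strictMono_of_deriv_pos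
  intro t
  rw [(hasDerivAt_mB β t).deriv]
  exact deriv_mB_pos β t

lemma cBeta_eq (β t : ℝ) :
    cBeta β t = Real.log (Zb β t) - Real.log (1 + 2 * Real.exp (-β)) := by
  rw [cBeta, ← Zb, Real.log_div (Zb_pos β t).ne' (onep2a_pos β).ne']

lemma exp_cBeta (β t : ℝ) :
    Real.exp (cBeta β t) = Zb β t / (1 + 2 * Real.exp (-β)) := by
  rw [cBeta, ← Zb, Real.exp_log (div_pos (Zb_pos β t) (onep2a_pos β))]

lemma hasDerivAt_cBeta (β t : ℝ) : HasDerivAt (cBeta β) (mB β t) t := by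
  have hfun : cBeta β = fun s => Real.log (Zb β s) - Real.log (1 + 2 * Real.exp (-β)) :=
    funext (cBeta_eq β)
  rw [hfun]
  have h := ((hasDerivAt_Zb β t).log (Zb_pos β t).ne').sub_const (Real.log (1 + 2 * Real.exp (-β)))
  simpa [mB] using h

lemma continuous_mB (β : ℝ) : Continuous (mB β) := by
  exact (Differentiable.continuous (fun t => (hasDerivAt_mB β t).differentiableAt))
lemma tilted_den (β t : ℝ) :
    Real.exp (-t) * (rhoBeta β).1 + (rhoBeta β).2.1 + Real.exp t * (rhoBeta β).2.2
      = Zb β t / (1 + 2 * Real.exp (-β)) := by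
  unfold rhoBeta Zb
  field_simp
  ring

lemma tilted_fst (β t : ℝ) :
    (tilted β t).1 = Real.exp (-β) * Real.exp (-t) / Zb β t := by
  unfold tilted
  rw [tilted_den]
  show Real.exp (-t) * (rhoBeta β).1 / _ = _
  unfold rhoBeta
  have hZ := (Zb_pos β t).ne'
  have hc := (onep2a_pos β).ne'
  field_simp

lemma tilted_snd1 (β t : ℝ) :
    (tilted β t).2.1 = 1 / Zb β t := by
  unfold tilted
  rw [tilted_den]
  show (rhoBeta β).2.1 / _ = _
  unfold rhoBeta
  have hZ := (Zb_pos β t).ne'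
  have hc := (onep2a_pos β).ne'
  field_simp

lemma tilted_snd2 (β t : ℝ) :
    (tilted β t).2.2 = Real.exp (-β) * Real.exp t / Zb β t := by
  unfold tilted
  rw [tilted_den]
  show Real.exp t * (rhoBeta β).2.2 / _ = _
  unfold rhoBeta
  have hZ := (Zb_pos β t).ne'
  have hc := (onep2a_pos β).ne'
  field_simp


lemma sup_attained (β t s : ℝ) :
    s * mB β t - cBeta β s ≤ t * mB β t - cBeta β t := by
  set g : ℝ → ℝ := fun u => cBeta β u - mB β t * u with hg
  have hgd : ∀ u, HasDerivAt g (mB β u - mB β t) u := by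
    intro u
    have h := (hasDerivAt_cBeta β u).sub ((hasDerivAt_id u).const_mul (mB β t))
    exact h.congr_deriv (by ring)
  have hcont : Continuous g := Differentiable.continuous fun u => (hgd u).differentiableAt
  have key : g t ≤ g s := by
    rcases le_total s t with h | h
    · have hanti : AntitoneOn g (Set.Iic t) := by
        apply antitoneOn_of_deriv_nonpos (convex_Iic t) hcont.continuousOn
        · intro u _
          exact (hgd u).differentiableAt.differentiableWithinAt
        · intro u hu
          rw [interior_Iic] at hu
          rw [(hgd u).deriv]
          have := (mB_strictMono β) hu
          linarith
      exact hanti (Set.mem_Iic.2 h) (Set.mem_Iic.2 le_rfl) h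
    · have hmono : MonotoneOn g (Set.Ici t) := by
        apply monotoneOn_of_deriv_nonneg (convex_Ici t) hcont.continuousOn
        · intro u _
          exact (hgd u).differentiableAt.differentiableWithinAt
        · intro u hu
          rw [interior_Ici] at hu
          rw [(hgd u).deriv]
          have := (mB_strictMono β) hu
          linarith
      exact hmono (Set.mem_Ici.2 le_rfl) (Set.mem_Ici.2 h) h
  simp only [hg] at key
  linarith

lemma cBeta_lower (β s : ℝ) :
    |s| - β - Real.log (1 + 2 * Real.exp (-β)) ≤ cBeta β s := by
  have h1 : Real.exp |s| ≤ Real.exp s + Real.exp (-s) := by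
    rcases abs_cases s with ⟨h, _⟩ | ⟨h, _⟩ <;> rw [h] <;>
      nlinarith [Real.exp_pos s, Real.exp_pos (-s)]
  have h2 : Real.exp (-β) * Real.exp |s| ≤ Zb β s := by
    rw [Zb]; nlinarith [Real.exp_pos (-β)]
  have h3 : Real.log (Real.exp (-β) * Real.exp |s|) ≤ Real.log (Zb β s) := by
    apply Real.log_le_log (by positivity) h2
  rw [← Real.exp_add, Real.log_exp] at h3
  rw [cBeta_eq]
  linarith

lemma J_term_bound (β z : ℝ) (hz : |z| ≤ 1) (s : ℝ) :
    s * z - cBeta β s ≤ β + Real.log (1 + 2 * Real.exp (-β)) := by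
  have h1 : s * z ≤ |s| := by
    calc s * z ≤ |s * z| := le_abs_self _
    _ = |s| * |z| := abs_mul s z
    _ ≤ |s| * 1 := by gcongr
    _ = |s| := mul_one _
  have h2 := cBeta_lower β s
  linarith

lemma bddAbove_J (β z : ℝ) (hz : |z| ≤ 1) :
    BddAbove (Set.range fun t => t * z - cBeta β t) := by
  refine ⟨β + Real.log (1 + 2 * Real.exp (-β)), ?_⟩
  rintro y ⟨s, rfl⟩
  exact J_term_bound β z hz s

lemma Jbeta_apply_mB (β t : ℝ) :
    Jbeta β (mB β t) = t * mB β t - cBeta β t := by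
  apply le_antisymm
  · exact ciSup_le fun s => sup_attained β t s
  · have hb : BddAbove (Set.range fun s => s * mB β t - cBeta β s) :=
      bddAbove_J β _ (abs_le.2 (mB_mem β t))
    exact le_ciSup hb t

lemma le_Jbeta (β z : ℝ) (hz : |z| ≤ 1) (t : ℝ) :
    t * z - cBeta β t ≤ Jbeta β z := le_ciSup (bddAbove_J β z hz) t

def Sent (p q : ℝ × ℝ × ℝ) : ℝ :=
  p.1 * Real.log (p.1 / q.1) + p.2.1 * Real.log (p.2.1 / q.2.1) +
    p.2.2 * Real.log (p.2.2 / q.2.2)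

lemma gibbs_term (p q : ℝ) (hp : 0 ≤ p) (hq : 0 < q) :
    p - q ≤ p * Real.log (p / q) ∧ (p * Real.log (p / q) = p - q → p = q) := by
  rcases hp.eq_or_lt with rfl | hp'
  · constructor
    · simp; linarith
    · intro h; simp at h; linarith
  · have hqp : 0 < q / p := div_pos hq hp'
    have hlog : Real.log (p / q) = - Real.log (q / p) := by
      rw [← Real.log_inv, inv_div]
    constructor
    · have h := Real.log_le_sub_one_of_pos hqp
      rw [hlog]
      have : p * (q / p) = q := by field_simp
      nlinarith
    · intro h
      by_contra hne
      have hne' : q / p ≠ 1 := by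
        intro h1
        apply hne
        field_simp at h1
        linarith
      have h2 := Real.log_lt_sub_one_of_pos hqp hne'
      rw [hlog] at h
      have : p * (q / p) = q := by field_simp
      nlinarith

lemma gibbs (p q : ℝ × ℝ × ℝ)
    (hp1 : 0 ≤ p.1) (hp2 : 0 ≤ p.2.1) (hp3 : 0 ≤ p.2.2)
    (hps : p.1 + p.2.1 + p.2.2 = 1)
    (hq1 : 0 < q.1) (hq2 : 0 < q.2.1) (hq3 : 0 < q.2.2)
    (hqs : q.1 + q.2.1 + q.2.2 = 1) :
    0 ≤ Sent p q ∧ (Sent p q = 0 → p = q) := by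
  obtain ⟨l1, e1⟩ := gibbs_term p.1 q.1 hp1 hq1
  obtain ⟨l2, e2⟩ := gibbs_term p.2.1 q.2.1 hp2 hq2
  obtain ⟨l3, e3⟩ := gibbs_term p.2.2 q.2.2 hp3 hq3
  constructor
  · unfold Sent; linarith
  · intro h
    unfold Sent at h
    have h1 : p.1 * Real.log (p.1 / q.1) = p.1 - q.1 := by linarith
    have h2 : p.2.1 * Real.log (p.2.1 / q.2.1) = p.2.1 - q.2.1 := by linarith
    have h3 : p.2.2 * Real.log (p.2.2 / q.2.2) = p.2.2 - q.2.2 := by linarith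
    have := e1 h1; have := e2 h2; have := e3 h3
    ext <;> assumption

lemma log_term (x ρ s : ℝ) (hx : 0 ≤ x) (hρ : 0 < ρ) :
    x * Real.log (x / (Real.exp s * ρ)) = x * Real.log (x / ρ) - x * s := by
  rcases hx.eq_or_lt with rfl | hx'
  · simp
  · have h : x / (Real.exp s * ρ) = (x / ρ) * Real.exp (-s) := by
      rw [Real.exp_neg]
      field_simp
    rw [h, Real.log_mul (by positivity) (Real.exp_ne_zero _), Real.log_exp]
    ring


lemma tilted_pos1 (β t : ℝ) : 0 < (tilted β t).1 := by
  rw [tilted_fst]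
  have := Zb_pos β t
  positivity

lemma tilted_pos2 (β t : ℝ) : 0 < (tilted β t).2.1 := by
  rw [tilted_snd1]
  have := Zb_pos β t
  positivity

lemma tilted_pos3 (β t : ℝ) : 0 < (tilted β t).2.2 := by
  rw [tilted_snd2]
  have := Zb_pos β t
  positivity

lemma tilted_sum (β t : ℝ) : (tilted β t).1 + (tilted β t).2.1 + (tilted β t).2.2 = 1 := by
  rw [tilted_fst, tilted_snd1, tilted_snd2, ← add_div, ← add_div,
    div_eq_one_iff_eq (Zb_pos β t).ne', Zb]
  ring

lemma tilted_isProbVec (β t : ℝ) : IsProbVec (tilted β t) :=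
  ⟨(tilted_pos1 β t).le, (tilted_pos2 β t).le, (tilted_pos3 β t).le, tilted_sum β t⟩

lemma meanPV_tilted_eq_mB (β t : ℝ) : meanPV (tilted β t) = mB β t := by
  rw [meanPV, tilted_snd2, tilted_fst, mB, div_sub_div_same]
  ring_nf

lemma tilted_fst_exp (β t : ℝ) :
    (tilted β t).1 = Real.exp (-t - cBeta β t) * (rhoBeta β).1 := by
  rw [tilted_fst, Real.exp_sub, exp_cBeta]
  show _ = _ / _ * (Real.exp (-β) / _)
  have hZ := (Zb_pos β t).ne'
  have hc := (onep2a_pos β).ne'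
  field_simp

lemma tilted_snd1_exp (β t : ℝ) :
    (tilted β t).2.1 = Real.exp (0 - cBeta β t) * (rhoBeta β).2.1 := by
  rw [tilted_snd1, Real.exp_sub, exp_cBeta, Real.exp_zero]
  show _ = _ / _ * (1 / _)
  have hZ := (Zb_pos β t).ne'
  have hc := (onep2a_pos β).ne'
  field_simp

lemma tilted_snd2_exp (β t : ℝ) :
    (tilted β t).2.2 = Real.exp (t - cBeta β t) * (rhoBeta β).2.2 := by
  rw [tilted_snd2, Real.exp_sub, exp_cBeta]
  show _ = _ / _ * (Real.exp (-β) / _)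
  have hZ := (Zb_pos β t).ne'
  have hc := (onep2a_pos β).ne'
  field_simp

lemma rho_pos1 (β : ℝ) : 0 < (rhoBeta β).1 := by
  show 0 < Real.exp (-β) / _
  positivity

lemma rho_pos2 (β : ℝ) : 0 < (rhoBeta β).2.1 := by
  show 0 < 1 / _
  positivity

lemma rho_pos3 (β : ℝ) : 0 < (rhoBeta β).2.2 := by
  show 0 < Real.exp (-β) / _
  positivity

lemma Sent_tilted (β t : ℝ) (μ : ℝ × ℝ × ℝ) (hμ : IsProbVec μ) :
    Sent μ (tilted β t) = Sent μ (rhoBeta β) - (t * meanPV μ - cBeta β t) := by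
  obtain ⟨h1, h2, h3, hs⟩ := hμ
  have e1 : μ.1 * Real.log (μ.1 / (tilted β t).1)
      = μ.1 * Real.log (μ.1 / (rhoBeta β).1) - μ.1 * (-t - cBeta β t) := by
    rw [tilted_fst_exp]
    exact log_term μ.1 (rhoBeta β).1 _ h1 (rho_pos1 β)
  have e2 : μ.2.1 * Real.log (μ.2.1 / (tilted β t).2.1)
      = μ.2.1 * Real.log (μ.2.1 / (rhoBeta β).2.1) - μ.2.1 * (0 - cBeta β t) := by
    rw [tilted_snd1_exp]
    exact log_term μ.2.1 (rhoBeta β).2.1 _ h2 (rho_pos2 β)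
  have e3 : μ.2.2 * Real.log (μ.2.2 / (tilted β t).2.2)
      = μ.2.2 * Real.log (μ.2.2 / (rhoBeta β).2.2) - μ.2.2 * (t - cBeta β t) := by
    rw [tilted_snd2_exp]
    exact log_term μ.2.2 (rhoBeta β).2.2 _ h3 (rho_pos3 β)
  unfold Sent meanPV
  rw [e1, e2, e3]
  linear_combination (cBeta β t) * hs

lemma Sent_self (β t : ℝ) : Sent (tilted β t) (tilted β t) = 0 := by
  unfold Sent
  rw [div_self (tilted_pos1 β t).ne', div_self (tilted_pos2 β t).ne',
    div_self (tilted_pos3 β t).ne', Real.log_one]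
  ring

lemma Sent_tilted_rho (β t : ℝ) :
    Sent (tilted β t) (rhoBeta β) = t * mB β t - cBeta β t := by
  have h := Sent_tilted β t (tilted β t) (tilted_isProbVec β t)
  rw [Sent_self, meanPV_tilted_eq_mB] at h
  linarith

lemma meanPV_mem (μ : ℝ × ℝ × ℝ) (hμ : IsProbVec μ) : meanPV μ ∈ Set.Icc (-1 : ℝ) 1 := by
  obtain ⟨h1, h2, h3, hs⟩ := hμ
  unfold meanPV
  constructor <;> [linarith; linarith]

lemma J_le_Sent (β : ℝ) (μ : ℝ × ℝ × ℝ) (hμ : IsProbVec μ) :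
    Jbeta β (meanPV μ) ≤ Sent μ (rhoBeta β) := by
  apply ciSup_le
  intro t
  have h0 := (gibbs μ (tilted β t) hμ.1 hμ.2.1 hμ.2.2.1 hμ.2.2.2
    (tilted_pos1 β t) (tilted_pos2 β t) (tilted_pos3 β t) (tilted_sum β t)).1
  have h1 := Sent_tilted β t μ hμ
  linarith

lemma exp_logIdentity (β : ℝ) :
    Real.exp (Real.log 3 - Real.log (1 + 2 * Real.exp (-β))) = 3 / (1 + 2 * Real.exp (-β)) := by
  rw [Real.exp_sub, Real.exp_log (by norm_num : (0:ℝ) < 3), Real.exp_log (onep2a_pos β)]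

lemma rho_snd1_exp (β : ℝ) :
    (rhoBeta β).2.1 = Real.exp (Real.log 3 - Real.log (1 + 2 * Real.exp (-β))) * (1/3) := by
  rw [exp_logIdentity]
  show 1 / _ = _
  have hc := (onep2a_pos β).ne'
  field_simp

lemma rho_fst_exp (β : ℝ) :
    (rhoBeta β).1 = Real.exp (Real.log 3 - Real.log (1 + 2 * Real.exp (-β)) - β) * (1/3) := by
  rw [Real.exp_sub, exp_logIdentity]
  show Real.exp (-β) / _ = _
  rw [Real.exp_neg]
  field_simp

lemma rho_snd2_exp (β : ℝ) :
    (rhoBeta β).2.2 = Real.exp (Real.log 3 - Real.log (1 + 2 * Real.exp (-β)) - β) * (1/3) :=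
  rho_fst_exp β

lemma F_eq (β K : ℝ) (μ : ℝ × ℝ × ℝ) (hμ : IsProbVec μ) :
    relEntUnif μ + β * fK K μ =
      Sent μ (rhoBeta β) + (Real.log 3 - Real.log (1 + 2 * Real.exp (-β)))
        - β * K * (meanPV μ) ^ 2 := by
  obtain ⟨h1, h2, h3, hs⟩ := hμ
  set c := Real.log 3 - Real.log (1 + 2 * Real.exp (-β)) with hc
  have third_pos : (0:ℝ) < 1/3 := by norm_num
  have e1 : μ.1 * Real.log (μ.1 / (rhoBeta β).1)
      = μ.1 * Real.log (μ.1 / (1/3)) - μ.1 * (c - β) := by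
    rw [rho_fst_exp]
    exact log_term μ.1 (1/3) _ h1 third_pos
  have e2 : μ.2.1 * Real.log (μ.2.1 / (rhoBeta β).2.1)
      = μ.2.1 * Real.log (μ.2.1 / (1/3)) - μ.2.1 * c := by
    rw [rho_snd1_exp]
    exact log_term μ.2.1 (1/3) _ h2 third_pos
  have e3 : μ.2.2 * Real.log (μ.2.2 / (rhoBeta β).2.2)
      = μ.2.2 * Real.log (μ.2.2 / (1/3)) - μ.2.2 * (c - β) := by
    rw [rho_snd2_exp]
    exact log_term μ.2.2 (1/3) _ h3 third_pos
  have d1 : μ.1 / (1/3 : ℝ) = 3 * μ.1 := by ring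
  have d2 : μ.2.1 / (1/3 : ℝ) = 3 * μ.2.1 := by ring
  have d3 : μ.2.2 / (1/3 : ℝ) = 3 * μ.2.2 := by ring
  rw [d1] at e1; rw [d2] at e2; rw [d3] at e3
  unfold Sent relEntUnif fK meanPV
  rw [e1, e2, e3]
  linear_combination c * hs

lemma exists_mB_ge (β z : ℝ) (hz1 : -1 < z) (hz2 : z < 1) : ∃ t : ℝ, z ≤ mB β t := by
  set a := Real.exp (-β) with ha
  have ha0 : 0 < a := Real.exp_pos _
  set T := Real.log ((1 + 2*a) / (a * (1 - z))) with hT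
  have hpos : 0 < (1 + 2*a) / (a * (1 - z)) := by
    apply div_pos (by linarith) (by nlinarith)
  have hET : Real.exp T = (1 + 2*a) / (a * (1 - z)) := Real.exp_log hpos
  have hETn : Real.exp (-T) = a * (1 - z) / (1 + 2*a) := by
    rw [Real.exp_neg, hET, inv_div]
  refine ⟨T, ?_⟩
  rw [mB, le_div_iff₀ (Zb_pos β T), Zb, ← ha, hET, hETn]
  have h2a : (0:ℝ) < 1 + 2*a := by linarith
  have h1z : (0:ℝ) < 1 - z := by linarith
  have hD : (0:ℝ) < a * (1 - z) * (1 + 2*a) := by positivity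
  have hL : z * (1 + a * ((1 + 2*a)/(a*(1-z)) + a*(1-z)/(1+2*a)))
      = (z * (a*(1-z)*(1+2*a) + a*((1+2*a)*(1+2*a) + (a*(1-z))*(a*(1-z)))))
          / (a*(1-z)*(1+2*a)) := by
    field_simp
  have hR : a * ((1 + 2*a)/(a*(1-z)) - a*(1-z)/(1+2*a))
      = (a * ((1+2*a)*(1+2*a) - (a*(1-z))*(a*(1-z)))) / (a*(1-z)*(1+2*a)) := by
    field_simp
  rw [hL, hR, div_le_div_iff₀ hD hD]
  have bracket_pos : 0 < (1+2*a)*((1+2*a) - z) - a^2*(1-z^2) := by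
    nlinarith [mul_pos ha0 h1z, sq_nonneg (a*z)]
  nlinarith [mul_pos (mul_pos ha0 h1z) bracket_pos, hD, mul_pos hD bracket_pos]

lemma exists_mB_eq (β z : ℝ) (hz1 : -1 < z) (hz2 : z < 1) : ∃ t : ℝ, mB β t = z := by
  obtain ⟨v, hv⟩ := exists_mB_ge β z hz1 hz2
  obtain ⟨w, hw⟩ := exists_mB_ge β (-z) (by linarith) (by linarith)
  have hu : mB β (-w) ≤ z := by rw [mB_neg]; linarith
  have huv : -w ≤ v := by
    by_contra h
    push_neg at h
    have := (mB_strictMono β) h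
    linarith
  have hIVT := intermediate_value_Icc huv (continuous_mB β).continuousOn
  obtain ⟨t, _, ht⟩ := hIVT ⟨hu, hv⟩
  exact ⟨t, ht⟩

lemma tildeE_interior (β K : ℝ) (hβ : 0 < β) (hK : 0 < K) (z : ℝ)
    (hz : z ∈ tildeE β K) : -1 < z ∧ z < 1 := by
  obtain ⟨⟨hz1, hz2⟩, hmin⟩ := hz
  have hβK : 0 < β * K := mul_pos hβ hK
  constructor
  · rcases lt_or_eq_of_le hz1 with h | h
    · exact h
    · exfalso
      set T := -(2*β*K + 1) with hT
      set y := mB β T with hy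
      have hy1 : -1 < y := neg_one_lt_mB β T
      have hy2 : y < 1 := mB_lt_one β T
      have hG := hmin y ⟨hy1.le, hy2.le⟩
      rw [← h] at hG
      have hJ1 : T * (-1 : ℝ) - cBeta β T ≤ Jbeta β (-1) :=
        le_Jbeta β (-1) (by norm_num) T
      have hJy : Jbeta β y = T * y - cBeta β T := Jbeta_apply_mB β T
      have key : 0 < (1 + y) * (-T - β*K*(1 - y)) := by
        apply mul_pos (by linarith)
        rw [hT]
        nlinarith
      nlinarith [hG, hJ1, hJy, key]
  · rcases lt_or_eq_of_le hz2 with h | h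
    · exact h
    · exfalso
      set T := 2*β*K + 1 with hT
      set y := mB β T with hy
      have hy1 : -1 < y := neg_one_lt_mB β T
      have hy2 : y < 1 := mB_lt_one β T
      have hG := hmin y ⟨hy1.le, hy2.le⟩
      rw [h] at hG
      have hJ1 : T * (1 : ℝ) - cBeta β T ≤ Jbeta β 1 :=
        le_Jbeta β 1 (by norm_num) T
      have hJy : Jbeta β y = T * y - cBeta β T := Jbeta_apply_mB β T
      have key : 0 < (1 - y) * (T - β*K*(1 + y)) := by
        apply mul_pos (by linarith)
        rw [hT]
        nlinarith
      nlinarith [hG, hJ1, hJy, key]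

lemma tildeE_stationary (β K : ℝ) (hβ : 0 < β) (hK : 0 < K) (z : ℝ)
    (hz : z ∈ tildeE β K) : mB β (2 * β * K * z) = z := by
  obtain ⟨hzi1, hzi2⟩ := tildeE_interior β K hβ hK z hz
  obtain ⟨t, ht⟩ := exists_mB_eq β z hzi1 hzi2
  set φ : ℝ → ℝ := fun s => s * mB β s - cBeta β s - β * K * (mB β s) ^ 2 with hφ
  have hφd : ∀ s, HasDerivAt φ
      (((Real.exp (-β) * (Real.exp s + Real.exp (-s)) + 4 * Real.exp (-β) ^ 2) / (Zb β s) ^ 2)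
        * (s - 2 * β * K * mB β s)) s := by
    intro s
    have h1 := ((hasDerivAt_id s).mul (hasDerivAt_mB β s)).sub (hasDerivAt_cBeta β s)
    have h2 := ((hasDerivAt_mB β s).pow 2).const_mul (β * K)
    have h3 := h1.sub h2
    refine h3.congr_deriv ?_
    simp only [id_eq, Nat.cast_ofNat, pow_one]
    ring
  have hmin : ∀ s, φ t ≤ φ s := by
    intro s
    have h1 : φ s = Jbeta β (mB β s) - β * K * (mB β s) ^ 2 := by
      rw [hφ, Jbeta_apply_mB]
    have h2 : φ t = Jbeta β z - β * K * z ^ 2 := by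
      rw [hφ]
      simp only [ht]
      rw [← ht, Jbeta_apply_mB, ht]
    rw [h1, h2]
    exact hz.2 (mB β s) ⟨(neg_one_lt_mB β s).le, (mB_lt_one β s).le⟩
  have hloc : IsLocalMin φ t := Filter.Eventually.of_forall hmin
  have hderiv0 : deriv φ t = 0 := hloc.deriv_eq_zero
  rw [(hφd t).deriv] at hderiv0
  have hpos := deriv_mB_pos β t
  have ht0 : t - 2 * β * K * mB β t = 0 := by
    rcases mul_eq_zero.mp hderiv0 with h | h
    · exact absurd h hpos.ne'
    · exact h
  rw [ht] at ht0
  have : t = 2 * β * K * z := by linarith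
  rw [← this, ht]

/-- Suppose `Ẽ_{β,K} = {z_1, …, z_r}` with `r ∈ {1,2,3}` distinct
points, and set `ν_z := tilted β (2βKz)` (mass at `i` proportional to
`e^{2βKz·i} ρ_β(i)`).  Then (1) for each `k`, `t_k = 2βK z_k` is the unique `t` whose
tilted measure has mean `z_k`, so in particular `ν_{z_k}` has mean `z_k`; (2) the
`ν_{z_k}` are pairwise distinct; (3) `E_{β,K} = {ν_{z_1}, …, ν_{z_r}}`. -/
theorem canonE_eq_tilted_of_tildeE (β K : ℝ) (hβ : 0 < β) (hK : 0 < K)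
    (r : ℕ) (hr : r = 1 ∨ r = 2 ∨ r = 3) (zs : Fin r → ℝ)
    (hzs : Function.Injective zs) (hE : tildeE β K = Set.range zs) :
    (∀ k : Fin r,
      meanPV (tilted β (2 * β * K * zs k)) = zs k ∧
      ∀ t : ℝ, meanPV (tilted β t) = zs k → t = 2 * β * K * zs k) ∧
    Function.Injective (fun k : Fin r => tilted β (2 * β * K * zs k)) ∧
    canonE β K = Set.range (fun k : Fin r => tilted β (2 * β * K * zs k)) := by
  have hmean : ∀ k : Fin r, meanPV (tilted β (2 * β * K * zs k)) = zs k := by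
    intro k
    have hzk : zs k ∈ tildeE β K := by rw [hE]; exact ⟨k, rfl⟩
    rw [meanPV_tilted_eq_mB]
    exact tildeE_stationary β K hβ hK _ hzk
  have huniq : ∀ (k : Fin r) (t : ℝ), meanPV (tilted β t) = zs k → t = 2 * β * K * zs k := by
    intro k t ht
    apply (mB_strictMono β).injective
    rw [← meanPV_tilted_eq_mB, ← meanPV_tilted_eq_mB, ht, hmean k]
  -- the common objective function comparison
  set C := Real.log 3 - Real.log (1 + 2 * Real.exp (-β)) with hC
  have hFtilted : ∀ k : Fin r,
      relEntUnif (tilted β (2 * β * K * zs k)) + β * fK K (tilted β (2 * β * K * zs k))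
        = (Jbeta β (zs k) - β * K * (zs k) ^ 2) + C := by
    intro k
    have hzk : zs k ∈ tildeE β K := by rw [hE]; exact ⟨k, rfl⟩
    have hmB : mB β (2 * β * K * zs k) = zs k := tildeE_stationary β K hβ hK _ hzk
    have h1 := F_eq β K (tilted β (2 * β * K * zs k)) (tilted_isProbVec β _)
    rw [hmean k] at h1
    have h2 := Sent_tilted_rho β (2 * β * K * zs k)
    rw [hmB] at h2
    have h3 : Jbeta β (zs k) = (2 * β * K * zs k) * zs k - cBeta β (2 * β * K * zs k) := by
      conv_lhs => rw [← hmB]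
      rw [Jbeta_apply_mB, hmB]
    rw [h1, h2, ← hC, h3]
    ring
  have hFlower : ∀ ν : ℝ × ℝ × ℝ, IsProbVec ν →
      (Jbeta β (meanPV ν) - β * K * (meanPV ν) ^ 2) + C ≤ relEntUnif ν + β * fK K ν := by
    intro ν hν
    have h1 := F_eq β K ν hν
    have h2 := J_le_Sent β ν hν
    rw [h1, ← hC]
    linarith
  refine ⟨fun k => ⟨hmean k, huniq k⟩, ?_, ?_⟩
  · intro j k h
    apply hzs
    have h2 : meanPV (tilted β (2 * β * K * zs j)) = meanPV (tilted β (2 * β * K * zs k)) := by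
      simp only at h
      rw [h]
    rw [hmean j, hmean k] at h2
    exact h2
  · ext μ
    constructor
    · rintro ⟨hμp, hμmin⟩
      have hr1 : 0 < r := by omega
      set k0 : Fin r := ⟨0, hr1⟩ with hk0
      have hz0 : zs k0 ∈ tildeE β K := by rw [hE]; exact ⟨k0, rfl⟩
      set z := meanPV μ with hz
      have hzIcc : z ∈ Set.Icc (-1 : ℝ) 1 := meanPV_mem μ hμp
      have hFle : relEntUnif μ + β * fK K μ ≤ (Jbeta β (zs k0) - β * K * (zs k0) ^ 2) + C := by
        rw [← hFtilted k0]
        exact hμmin _ (tilted_isProbVec β _)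
      have hFge := hFlower μ hμp
      rw [← hz] at hFge
      -- z is a minimizer
      have hzmin : z ∈ tildeE β K := by
        refine ⟨hzIcc, fun y hy => ?_⟩
        have := hz0.2 y hy
        linarith
      have hGz : Jbeta β (zs k0) - β * K * (zs k0) ^ 2 = Jbeta β z - β * K * z ^ 2 :=
        le_antisymm (hz0.2 z hzIcc) (hzmin.2 (zs k0) hz0.1)
      obtain ⟨k, hk⟩ : ∃ k, zs k = z := by
        have := hzmin
        rw [hE] at this
        exact this
      -- equality of entropies
      have hSent_eq : Sent μ (rhoBeta β) = Jbeta β z := by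
        have h1 := F_eq β K μ hμp
        rw [← hz, ← hC] at h1
        have h2 := J_le_Sent β μ hμp
        rw [← hz] at h2
        rw [hGz] at hFle
        linarith
      have hmB : mB β (2 * β * K * z) = z := tildeE_stationary β K hβ hK z hzmin
      set t := 2 * β * K * z with htdef
      have hJz : Jbeta β z = t * z - cBeta β t := by
        conv_lhs => rw [← hmB]
        rw [Jbeta_apply_mB, hmB]
      have hSt : Sent μ (tilted β t) = 0 := by
        rw [Sent_tilted β t μ hμp, ← hz, hSent_eq, hJz]
        ring
      have hμeq : μ = tilted β t :=
        (gibbs μ (tilted β t) hμp.1 hμp.2.1 hμp.2.2.1 hμp.2.2.2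
          (tilted_pos1 β t) (tilted_pos2 β t) (tilted_pos3 β t) (tilted_sum β t)).2 hSt
      exact ⟨k, by simp only; rw [hk, ← htdef, ← hμeq]⟩
    · rintro ⟨k, rfl⟩
      refine ⟨tilted_isProbVec β _, fun ν hν => ?_⟩
      have h1 := hFtilted k
      have h2 := hFlower ν hν
      have hzk : zs k ∈ tildeE β K := by rw [hE]; exact ⟨k, rfl⟩
      have h3 := hzk.2 (meanPV ν) (meanPV_mem ν hν)
      simp only
      rw [h1]
      linarith
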